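/- Let n ≥ 1 and i ≥ 1 be integers, λ_1,…,λ_n ∈ ℂ and δ ∈ ℂ. Then h_i(λ_1+δ,…,λ_n+δ) = Σ_{j=0}^{i} C(n+i−1, j)·h_{i−j}(λ_1,…,λ_n)·δ^j, where C(a,b) denotes the binomial coefficient. (Lemma 'twist' of the paper.) -/

import Mathlib

/-- The `k`-th complete homogeneous symmetric polynomial
`h_k(x_1,…,x_N) = Σ_{i_1 ≤ ⋯ ≤ i_k} x_{i_1}⋯x_{i_k}` (`hsymm x 0 = 1`). -/
noncomputable def hsymm {N : ℕ} (x : Fin N → ℂ) (k : ℕ) : ℂ :=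
  ∑ f ∈ Finset.univ.filter (fun f : Fin k → Fin N => ∀ a b : Fin k, a ≤ b → f a ≤ f b),
    ∏ a : Fin k, x (f a)

lemma hsymm_zero {N : ℕ} (x : Fin N → ℂ) : hsymm x 0 = 1 := by
  simp [hsymm]

lemma hsymm_one_var (x : Fin 1 → ℂ) (k : ℕ) : hsymm x k = x 0 ^ k := by
  have h1 : (Finset.univ.filter (fun f : Fin k → Fin 1 => ∀ a b : Fin k, a ≤ b → f a ≤ f b))
      = Finset.univ := by
    apply Finset.filter_true_of_mem
    intro f _ a b _
    exact le_of_eq (Subsingleton.elim (f a) (f b))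
  rw [hsymm, h1]
  rw [Finset.sum_eq_single (fun _ => (0 : Fin 1))]
  · simp
  · intro f _ hf
    exact absurd (Subsingleton.elim f _) hf
  · simp

lemma hsymm_succ {n : ℕ} (x : Fin (n+1) → ℂ) (k : ℕ) :
    hsymm x (k+1) = hsymm (x ∘ Fin.castSucc) (k+1) + x (Fin.last n) * hsymm x k := by
  classical
  rw [hsymm, hsymm, hsymm]
  rw [← Finset.sum_filter_add_sum_filter_not
    (Finset.univ.filter (fun f : Fin (k+1) → Fin (n+1) => ∀ a b : Fin (k+1), a ≤ b → f a ≤ f b))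
    (fun f => f (Fin.last k) = Fin.last n)]
  rw [add_comm]
  congr 1
  · -- values avoid last n  ↦  functions into Fin n
    refine Finset.sum_bij'
      (i := fun f hf => fun a => (f a).castPred ?_)
      (j := fun g _ => fun a => (g a).castSucc) ?_ ?_ ?_ ?_ ?_
    · -- f a ≠ last n
      obtain ⟨hf1, hf2⟩ := Finset.mem_filter.1 hf
      obtain ⟨-, hmono⟩ := Finset.mem_filter.1 hf1
      exact Fin.lt_last_iff_ne_last.1
        (lt_of_le_of_lt (hmono a (Fin.last k) (Fin.le_last a)) (Fin.lt_last_iff_ne_last.2 hf2))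
    · intro f hf
      obtain ⟨hf1, _⟩ := Finset.mem_filter.1 hf
      obtain ⟨-, hmono⟩ := Finset.mem_filter.1 hf1
      simp only [Finset.mem_filter, Finset.mem_univ, true_and]
      intro a b hab
      exact Fin.castPred_le_castPred_iff.2 (hmono a b hab)
    · intro g hg
      obtain ⟨-, hmono⟩ := Finset.mem_filter.1 hg
      simp only [Finset.mem_filter, Finset.mem_univ, true_and]
      constructor
      · exact fun a b hab => Fin.castSucc_le_castSucc_iff.2 (hmono a b hab)
      · exact Fin.ne_of_lt (Fin.castSucc_lt_last _)
    · intro f hf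
      funext a
      exact Fin.castSucc_castPred _ _
    · intro g hg
      funext a
      exact Fin.castPred_castSucc _
    · intro f hf
      refine Finset.prod_congr rfl fun a _ => ?_
      simp [Fin.castSucc_castPred]
  · -- last value = last n  ↦  drop it
    rw [Finset.mul_sum]
    refine Finset.sum_bij'
      (i := fun f _ => Fin.init f)
      (j := fun g _ => Fin.snoc g (Fin.last n)) ?_ ?_ ?_ ?_ ?_
    · intro f hf
      obtain ⟨hf1, _⟩ := Finset.mem_filter.1 hf
      obtain ⟨-, hmono⟩ := Finset.mem_filter.1 hf1
      simp only [Finset.mem_filter, Finset.mem_univ, true_and]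
      intro a b hab
      exact hmono _ _ (Fin.castSucc_le_castSucc_iff.2 hab)
    · intro g hg
      obtain ⟨-, hmono⟩ := Finset.mem_filter.1 hg
      simp only [Finset.mem_filter, Finset.mem_univ, true_and]
      constructor
      · intro a b hab
        induction b using Fin.lastCases with
        | last => rw [Fin.snoc_last]; exact Fin.le_last _
        | cast b' =>
          induction a using Fin.lastCases with
          | last => exact absurd hab (Fin.castSucc_lt_last b').not_ge
          | cast a' =>
            simp only [Fin.snoc_castSucc]
            exact hmono _ _ (Fin.castSucc_le_castSucc_iff.1 hab)
      · simp [Fin.snoc_last]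
    · intro f hf
      obtain ⟨-, hlast⟩ := Finset.mem_filter.1 hf
      show Fin.snoc (Fin.init f) (Fin.last n) = f
      rw [← hlast]
      exact Fin.snoc_init_self f
    · intro g hg
      exact Fin.init_snoc _ _
    · intro f hf
      obtain ⟨-, hlast⟩ := Finset.mem_filter.1 hf
      rw [Fin.prod_univ_castSucc]
      rw [hlast, mul_comm]
      rfl

lemma twist_aux (n : ℕ) (hn : 1 ≤ n) : ∀ (i : ℕ) (lam : Fin n → ℂ) (δ : ℂ),
    hsymm (fun k => lam k + δ) i =
      ∑ j ∈ Finset.range (i + 1),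
        (Nat.choose (n + i - 1) j : ℂ) * hsymm lam (i - j) * δ ^ j := by
  induction n, hn using Nat.le_induction with
  | base =>
    intro i lam δ
    rw [hsymm_one_var]
    have e : 1 + i - 1 = i := by omega
    rw [e]
    show (lam 0 + δ) ^ i = _
    rw [add_comm (lam 0) δ, add_pow]
    refine Finset.sum_congr rfl fun j hj => ?_
    rw [hsymm_one_var]
    ring
  | succ n hn IH =>
    intro i
    induction i with
    | zero =>
      intro lam δ
      simp [hsymm_zero]
    | succ i IH2 =>
      intro lam δ
      rw [hsymm_succ]
      have hcomp : (fun k : Fin (n+1) => lam k + δ) ∘ Fin.castSucc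
          = fun k : Fin n => (lam ∘ Fin.castSucc) k + δ := rfl
      rw [hcomp, IH (i+1) (lam ∘ Fin.castSucc) δ, IH2 lam δ]
      have e1 : n + (i+1) - 1 = n + i := by omega
      have e2 : (n+1) + i - 1 = n + i := by omega
      have e3 : (n+1) + (i+1) - 1 = n + i + 1 := by omega
      rw [e1, e2, e3]
      set L : ℂ := lam (Fin.last n) with hL
      have key : ∀ j ∈ Finset.range (i+1),
          ((n+i).choose j : ℂ) * hsymm (lam ∘ Fin.castSucc) (i+1-j) * δ^j
          = ((n+i).choose j : ℂ) * hsymm lam (i+1-j) * δ^j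
            - L * (((n+i).choose j : ℂ) * hsymm lam (i-j) * δ^j) := by
        intro j hj
        have hj' : j ≤ i := by have := Finset.mem_range.1 hj; omega
        have hsub : i + 1 - j = (i - j) + 1 := by omega
        rw [hsub, eq_sub_of_add_eq (hsymm_succ lam (i-j)).symm]
        ring
      rw [Finset.sum_range_succ
        (f := fun j => ((n+i).choose j : ℂ) * hsymm (lam ∘ Fin.castSucc) (i+1-j) * δ^j)]
      rw [Finset.sum_congr rfl key]
      rw [Finset.sum_sub_distrib]
      rw [Finset.sum_range_succ'
        (f := fun j => ((n+i+1).choose j : ℂ) * hsymm lam (i+1-j) * δ^j)]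
      have pas : ∀ j ∈ Finset.range (i+1),
          ((n+i+1).choose (j+1) : ℂ) * hsymm lam (i+1-(j+1)) * δ^(j+1)
          = ((n+i).choose j : ℂ) * hsymm lam (i-j) * δ^(j+1)
            + ((n+i).choose (j+1) : ℂ) * hsymm lam (i-j) * δ^(j+1) := by
        intro j hj
        have : (n+i+1).choose (j+1) = (n+i).choose j + (n+i).choose (j+1) := by
          exact Nat.choose_succ_succ _ _
        rw [this]
        have : i + 1 - (j + 1) = i - j := by omega
        rw [this]
        push_cast
        ring
      rw [Finset.sum_congr rfl pas, Finset.sum_add_distrib]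
      have h0 : hsymm lam 0 = 1 := hsymm_zero lam
      have sA := Finset.sum_range_succ
        (f := fun j => ((n+i).choose j : ℂ) * hsymm lam (i+1-j) * δ^j) (i+1)
      have sA' := Finset.sum_range_succ'
        (f := fun j => ((n+i).choose j : ℂ) * hsymm lam (i+1-j) * δ^j) (i+1)
      rw [sA'] at sA
      simp only [Nat.add_sub_cancel, Nat.sub_self, h0, hsymm_zero, Nat.choose_zero_right,
        Nat.cast_one, one_mul, pow_zero, mul_one, Nat.sub_zero] at sA ⊢
      have sA2 : ∀ j ∈ Finset.range (i+1),
          ((n+i).choose (j+1) : ℂ) * hsymm lam (i+1-(j+1)) * δ^(j+1)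
          = ((n+i).choose (j+1) : ℂ) * hsymm lam (i-j) * δ^(j+1) := by
        intro j hj
        have : i + 1 - (j + 1) = i - j := by omega
        rw [this]
      rw [Finset.sum_congr rfl sA2] at sA
      have m1 : ∑ x ∈ Finset.range (i+1), L * (((n+i).choose x : ℂ) * hsymm lam (i-x) * δ^x)
          = L * ∑ x ∈ Finset.range (i+1), ((n+i).choose x : ℂ) * hsymm lam (i-x) * δ^x :=
        (Finset.mul_sum _ _ _).symm
      have m2 : δ * ∑ x ∈ Finset.range (i+1), ((n+i).choose x : ℂ) * hsymm lam (i-x) * δ^x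
          = ∑ x ∈ Finset.range (i+1), ((n+i).choose x : ℂ) * hsymm lam (i-x) * δ^(x+1) := by
        rw [Finset.mul_sum]
        exact Finset.sum_congr rfl fun j _ => by ring
      linear_combination -sA + m2 - m1

theorem lemma_twist (n i : ℕ) (hn : 1 ≤ n) (hi : 1 ≤ i) (lam : Fin n → ℂ) (δ : ℂ) :
    hsymm (fun k => lam k + δ) i =
      ∑ j ∈ Finset.range (i + 1),
        (Nat.choose (n + i - 1) j : ℂ) * hsymm lam (i - j) * δ ^ j := by
  exact twist_aux n hn i lam δ
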